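/- Let p > 0 be a real number, and let U, V : ℤ → ℝ be the Lucas sequences of the first and second kind with parameter p: U(0)=0, U(1)=1, V(0)=2, V(1)=p, and U(n)=p·U(n−1)+U(n−2), V(n)=p·V(n−1)+V(n−2) for all n ∈ ℤ. Then for all positive integers n and k: ∑_{j=0}^{n} 2^j·V(k·2^j)/U(k·2^j)² = ((−1)^k·2 + V(k))/U(k)² + 2·(1 − (−1)^k)·V(2k)/U(2k)² − 2^{n+1}/U(k·2^n)². -/

import Mathlib

/-- a Rabinowitz-type summation identity for the Lucas sequences
of the first and second kind with parameter `p > 0`. -/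
theorem statement13 (p : ℝ) (hp : 0 < p)
    (U V : ℤ → ℝ)
    (hU0 : U 0 = 0) (hU1 : U 1 = 1)
    (hU : ∀ n : ℤ, U n = p * U (n - 1) + U (n - 2))
    (hV0 : V 0 = 2) (hV1 : V 1 = p)
    (hV : ∀ n : ℤ, V n = p * V (n - 1) + V (n - 2))
    (n k : ℕ) (hn : 1 ≤ n) (hk : 1 ≤ k) :
    ∑ j ∈ Finset.range (n + 1),
        2 ^ j * V ((k : ℤ) * 2 ^ j) / U ((k : ℤ) * 2 ^ j) ^ 2 =
      ((-1 : ℝ) ^ k * 2 + V (k : ℤ)) / U (k : ℤ) ^ 2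
        + 2 * (1 - (-1 : ℝ) ^ k) * V (2 * (k : ℤ)) / U (2 * (k : ℤ)) ^ 2
        - 2 ^ (n + 1) / U ((k : ℤ) * 2 ^ n) ^ 2 := by
  -- normalized recurrences
  have hrecU : ∀ m : ℤ, U (m + 2) = p * U (m + 1) + U m := by
    intro m
    have h := hU (m + 2)
    rw [show m + 2 - 1 = m + 1 by ring, show m + 2 - 2 = m by ring] at h
    exact h
  have hrecV : ∀ m : ℤ, V (m + 2) = p * V (m + 1) + V m := by
    intro m
    have h := hV (m + 2)
    rw [show m + 2 - 1 = m + 1 by ring, show m + 2 - 2 = m by ring] at h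
    exact h
  have hUneg : U (-1) = 1 := by
    have h := hU 1
    norm_num [hU0, hU1] at h
    linarith
  -- positivity
  have upos : ∀ m : ℤ, 0 ≤ m → 0 ≤ U m ∧ 0 < U (m + 1) := by
    refine Int.le_induction ?_ ?_
    · norm_num [hU0, hU1]
    · rintro m hm ⟨ih1, ih2⟩
      refine ⟨ih2.le, ?_⟩
      rw [show m + 1 + 1 = m + 2 by ring, hrecU]
      nlinarith
  have Upos : ∀ m : ℤ, 1 ≤ m → 0 < U m := by
    intro m hm
    have h := (upos (m - 1) (by omega)).2
    rwa [show m - 1 + 1 = m by ring] at h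
  -- V in terms of U
  have vu : ∀ m : ℤ, 0 ≤ m → V m = U (m + 1) + U (m - 1) := by
    have key : ∀ m : ℤ, 0 ≤ m →
        V m = U (m + 1) + U (m - 1) ∧ V (m + 1) = U (m + 2) + U m := by
      refine Int.le_induction ?_ ?_
      · constructor
        · norm_num [hV0, hU1, hUneg]
        · have h := hrecU 0
          norm_num [hU0, hU1] at h
          norm_num [hV1, hU0, h]
      · rintro m hm ⟨ih1, ih2⟩
        constructor
        · rw [show m + 1 + 1 = m + 2 by ring, show m + 1 - 1 = m by ring]; exact ih2
        · rw [show m + 1 + 1 = m + 2 by ring, show m + 1 + 2 = m + 3 by ring]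
          have h := hrecU (m - 1)
          rw [show m - 1 + 2 = m + 1 by ring, show m - 1 + 1 = m by ring] at h
          have h2 := hrecU (m + 1)
          rw [show m + 1 + 2 = m + 3 by ring, show m + 1 + 1 = m + 2 by ring] at h2
          linear_combination hrecV m + p * ih2 + ih1 - h2 - h
    exact fun m hm => (key m hm).1
  -- addition formula
  have addu : ∀ m l : ℤ, 0 ≤ l → U (m + l) = U m * U (l + 1) + U (m - 1) * U l := by
    have key : ∀ m l : ℤ, 0 ≤ l → U (m + l) = U m * U (l + 1) + U (m - 1) * U l ∧
        U (m + l + 1) = U m * U (l + 2) + U (m - 1) * U (l + 1) := by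
      intro m
      refine Int.le_induction ?_ ?_
      · have h2 : U 2 = p := by have := hrecU 0; norm_num [hU0, hU1] at this; linarith
        have hm1 := hrecU (m - 1)
        rw [show m - 1 + 2 = m + 1 by ring, show m - 1 + 1 = m by ring] at hm1
        norm_num [hU0, hU1, h2]
        linarith [hm1]
      · rintro l hl ⟨ih1, ih2⟩
        constructor
        · rw [show m + (l + 1) = m + l + 1 by ring, show l + 1 + 1 = l + 2 by ring]
          exact ih2
        · rw [show m + (l + 1) + 1 = m + l + 2 by ring, show l + 1 + 2 = l + 3 by ring,
            show l + 1 + 1 = l + 2 by ring]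
          have h1 := hrecU (m + l)
          have h2 := hrecU (l + 1)
          rw [show l + 1 + 2 = l + 3 by ring, show l + 1 + 1 = l + 2 by ring] at h2
          linear_combination h1 + p * ih2 + ih1 - U m * h2 - U (m - 1) * hrecU l
    exact fun m l hl => (key m l hl).1
  -- Cassini
  have cassini : ∀ m : ℤ, 0 ≤ m → U (m + 1) * U (m - 1) - U m ^ 2 = (-1 : ℝ) ^ m := by
    refine Int.le_induction ?_ ?_
    · norm_num [hU0, hU1, hUneg]
    · intro m hm ih
      rw [show m + 1 + 1 = m + 2 by ring, show m + 1 - 1 = m by ring,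
        zpow_add_one₀ (by norm_num : (-1:ℝ) ≠ 0)]
      have h := hrecU (m - 1)
      rw [show m - 1 + 2 = m + 1 by ring, show m - 1 + 1 = m by ring] at h
      linear_combination U m * hrecU m - U (m + 1) * h - ih
  -- doubling formulas
  have Udouble : ∀ m : ℤ, 0 ≤ m → U (2 * m) = U m * V m := by
    intro m hm
    have h := addu m m hm
    rw [show m + m = 2 * m by ring] at h
    rw [h, vu m hm]
    ring
  have Vsq : ∀ m : ℤ, 1 ≤ m → V m ^ 2 = V (2 * m) + 2 * (-1 : ℝ) ^ m := by
    intro m hm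
    have a1 := addu m (m + 1) (by omega)
    rw [show m + (m + 1) = 2 * m + 1 by ring, show m + 1 + 1 = m + 2 by ring] at a1
    have a2 := addu m (m - 1) (by omega)
    rw [show m + (m - 1) = 2 * m - 1 by ring, show m - 1 + 1 = m by ring] at a2
    have v1 := vu m (by omega)
    have v2 := vu (2 * m) (by omega)
    have cas := cassini m (by omega)
    have hc := hrecU (m - 1)
    rw [show m - 1 + 2 = m + 1 by ring, show m - 1 + 1 = m by ring] at hc
    rw [v1, v2, a1, a2, hrecU m, ← cas]
    linear_combination U (m + 1) * hc
  have negpow_even : ∀ t : ℤ, (-1 : ℝ) ^ (2 * t) = 1 := by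
    intro t
    rw [zpow_mul]
    norm_num
  -- the telescoping building block
  have L : ∀ m : ℤ, 1 ≤ m → V (2 * m) / U (2 * m) ^ 2
      = 1 / U m ^ 2 - 2 * (-1 : ℝ) ^ m / U (2 * m) ^ 2 := by
    intro m hm
    have hUm := Upos m hm
    have hU2m := Upos (2 * m) (by omega)
    have hd := Udouble m (by omega)
    have hv := Vsq m hm
    have hVm : V m ≠ 0 := by
      intro h0
      rw [hd, h0, mul_zero] at hU2m
      exact lt_irrefl _ hU2m
    rw [hd]
    field_simp
    linear_combination (-1 : ℝ) * hv
  -- main facts at k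
  have hk1 : (1 : ℤ) ≤ (k : ℤ) := by exact_mod_cast hk
  have hcast : (-1 : ℝ) ^ ((k : ℕ) : ℤ) = (-1 : ℝ) ^ k := zpow_natCast _ k
  have Lk := L k hk1
  rw [hcast] at Lk
  have hε : ((-1 : ℝ) ^ k) ^ 2 = 1 := by
    rw [← pow_mul, mul_comm, pow_mul]
    norm_num
  -- induction on n
  induction n, hn using Nat.le_induction with
  | base =>
    rw [Finset.sum_range_succ, Finset.sum_range_one]
    norm_num
    rw [show (k : ℤ) * 2 = 2 * (k : ℤ) by ring]
    linear_combination (2 * (-1 : ℝ) ^ k) * Lk - (4 / U (2 * (k : ℤ)) ^ 2) * hε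
  | succ n hn ih =>
    rw [Finset.sum_range_succ]
    obtain ⟨t, rfl⟩ : ∃ t, n = t + 1 := ⟨n - 1, by omega⟩
    have hm1 : (1 : ℤ) ≤ (k : ℤ) * 2 ^ (t + 1) := by
      have h2 : (0 : ℤ) < 2 ^ (t + 1) := pow_pos (by norm_num) _
      nlinarith
    have Lm := L ((k : ℤ) * 2 ^ (t + 1)) hm1
    have heven : (-1 : ℝ) ^ ((k : ℤ) * 2 ^ (t + 1)) = 1 := by
      rw [show (k : ℤ) * 2 ^ (t + 1) = 2 * ((k : ℤ) * 2 ^ t) by ring]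
      exact negpow_even _
    rw [heven] at Lm
    rw [show (k : ℤ) * 2 ^ (t + 1 + 1) = 2 * ((k : ℤ) * 2 ^ (t + 1)) by ring]
    linear_combination ih + (2 : ℝ) ^ (t + 2) * Lm
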